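/- Let {a_1 (mod d_1), …, a_n (mod d_n)} be a covering system, and let p_1, …, p_n be pairwise distinct primes with p_i dividing 2^{d_i} − 1 for each i. Set M = 2 · p_1 · p_2 · ⋯ · p_n. Then there exists a residue a modulo M such that for every natural number k and every integer x ≡ a (mod M), some p_i divides x − 2^k. -/

import Mathlib

theorem cdl_arithmetic_progression (n : ℕ) (a : Fin n → ℤ) (d : Fin n → ℕ)
    (hcov : ∀ k : ℤ, ∃ i, k ≡ a i [ZMOD d i])
    (p : Fin n → ℕ) (hp : ∀ i, (p i).Prime) (hinj : Function.Injective p)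
    (hdvd : ∀ i, p i ∣ 2 ^ d i - 1) :
    ∃ A : ℤ, ∀ k : ℕ, ∀ x : ℤ,
      x ≡ A [ZMOD (2 * ∏ i, p i : ℕ)] → ∃ i, (p i : ℤ) ∣ x - 2 ^ k := by
  classical
  -- the residue exponents
  set r : Fin n → ℕ := fun i => if d i = 0 then (a i).toNat else ((a i) % (d i)).toNat with hr
  have hs : ∀ i ∈ (Finset.univ : Finset (Fin n)), p i ≠ 0 := fun i _ => (hp i).ne_zero
  have hpp : Set.Pairwise (Finset.univ : Finset (Fin n)) (Function.onFun Nat.Coprime p) := by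
    intro i _ j _ hij
    exact (Nat.coprime_primes (hp i) (hp j)).mpr (fun h => hij (hinj h))
  obtain ⟨A₀, hA₀⟩ := Nat.chineseRemainderOfFinset (fun i => 2 ^ r i) p Finset.univ hs hpp
  refine ⟨(A₀ : ℤ), ?_⟩
  intro k x hx
  obtain ⟨i, hi⟩ := hcov k
  refine ⟨i, ?_⟩
  -- x ≡ A₀ mod p i
  have hpiM : (p i : ℤ) ∣ ((2 * ∏ j, p j : ℕ) : ℤ) := by
    exact_mod_cast Nat.cast_dvd_cast (Dvd.dvd.mul_left (Finset.dvd_prod_of_mem p (Finset.mem_univ i)) 2)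
  have hx' : x ≡ (A₀ : ℤ) [ZMOD (p i)] := hx.of_dvd hpiM
  -- A₀ ≡ 2 ^ r i mod p i
  have hA : ((2:ℤ) ^ r i) ≡ (A₀ : ℤ) [ZMOD (p i)] := by
    have := (hA₀ i (Finset.mem_univ i)).symm
    exact_mod_cast Int.natCast_modEq_iff.mpr this
  -- 2 ^ k ≡ 2 ^ r i mod p i
  have hk : ((2:ℤ) ^ k) ≡ ((2:ℤ) ^ r i) [ZMOD (p i)] := by
    by_cases hd : d i = 0
    · -- then k = a i and r i = k
      have : (k : ℤ) = a i := by simpa [Int.ModEq, hd] using hi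
      have : r i = k := by simp [hr, hd, ← this]
      rw [this]
    · -- r i = k % d i
      have hdpos : 0 < d i := Nat.pos_of_ne_zero hd
      have hmod : (k : ℤ) % (d i) = (a i) % (d i) := hi
      have hrk : r i = k % d i := by
        have h1 : ((r i : ℕ) : ℤ) = (a i) % (d i) := by
          simp only [hr, hd, if_neg, ite_false]
          exact Int.toNat_of_nonneg (Int.emod_nonneg _ (Int.natCast_ne_zero.mpr hd))
        have h2 : ((k % d i : ℕ) : ℤ) = (k : ℤ) % (d i) := (by push_cast; ring)
        have : ((r i : ℕ) : ℤ) = ((k % d i : ℕ) : ℤ) := by rw [h1, h2, hmod]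
        exact_mod_cast this
      -- 2 ^ d i ≡ 1 mod p i
      have h1 : (1:ℤ) ≡ (2:ℤ) ^ d i [ZMOD (p i)] := by
        have hh : (1:ℕ) ≡ 2 ^ d i [MOD p i] :=
          (Nat.modEq_iff_dvd' (Nat.one_le_two_pow)).mpr (hdvd i)
        exact_mod_cast Int.natCast_modEq_iff.mpr hh
      calc (2:ℤ) ^ k = ((2:ℤ) ^ d i) ^ (k / d i) * 2 ^ (k % d i) := by
            rw [← pow_mul, ← pow_add, Nat.div_add_mod]
        _ ≡ 1 ^ (k / d i) * 2 ^ (k % d i) [ZMOD (p i)] :=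
            Int.ModEq.mul ((h1.symm).pow _) Int.ModEq.rfl
        _ = 2 ^ (r i) := by rw [one_pow, one_mul, hrk]
  -- conclude
  have : ((2:ℤ) ^ k) ≡ x [ZMOD (p i)] := hk.trans (hA.trans hx'.symm)
  exact Int.ModEq.dvd this
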